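/- Let E be the Toeplitz graph: two vertices v, w, a loop c at v, and an edge f from v to w, and let L = L_K(E) over a field K with S the two-sided ideal generated by w. Then S is the internal direct sum Lw ⊕ ⊕_{n=0}^∞ L·(wf*(c*)^n) of infinitely many simple left ideals, and S is not a direct summand of L as a left L-module. -/

import Mathlib

/-- Generators of the Leavitt path algebra of the Toeplitz graph: the vertices
`v`, `w`, the edges `c` (a loop at `v`), `f` (from `v` to `w`), and the ghost edges
`cs = c*`, `fs = f*`. -/
inductive TG : Type
  | v | w | c | f | cs | fs

open FreeAlgebra in
/-- The defining relations of the Leavitt path algebra of the Toeplitz graph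
(`E⁰ = {v, w}`, `E¹ = {c, f}`, `s(c) = r(c) = s(f) = v`, `r(f) = w`). -/
inductive TRel (K : Type*) [Field K] : FreeAlgebra K TG → FreeAlgebra K TG → Prop
  | vv : TRel K (ι K TG.v * ι K TG.v) (ι K TG.v)
  | ww : TRel K (ι K TG.w * ι K TG.w) (ι K TG.w)
  | vw : TRel K (ι K TG.v * ι K TG.w) 0
  | wv : TRel K (ι K TG.w * ι K TG.v) 0
  | sc : TRel K (ι K TG.v * ι K TG.c) (ι K TG.c)
  | rc : TRel K (ι K TG.c * ι K TG.v) (ι K TG.c)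
  | sf : TRel K (ι K TG.v * ι K TG.f) (ι K TG.f)
  | rf : TRel K (ι K TG.f * ι K TG.w) (ι K TG.f)
  | rcs : TRel K (ι K TG.v * ι K TG.cs) (ι K TG.cs)
  | scs : TRel K (ι K TG.cs * ι K TG.v) (ι K TG.cs)
  | rfs : TRel K (ι K TG.w * ι K TG.fs) (ι K TG.fs)
  | sfs : TRel K (ι K TG.fs * ι K TG.v) (ι K TG.fs)
  | ck1cc : TRel K (ι K TG.cs * ι K TG.c) (ι K TG.v)
  | ck1ff : TRel K (ι K TG.fs * ι K TG.f) (ι K TG.w)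
  | ck1cf : TRel K (ι K TG.cs * ι K TG.f) 0
  | ck1fc : TRel K (ι K TG.fs * ι K TG.c) 0
  | ck2v : TRel K (ι K TG.v) (ι K TG.c * ι K TG.cs + ι K TG.f * ι K TG.fs)

/-- The Leavitt path algebra of the Toeplitz graph over `K`: the free algebra on the
generators modulo the Leavitt relations. -/
abbrev ToeplitzL (K : Type*) [Field K] : Type _ := RingQuot (TRel K)

variable (K : Type*) [Field K]

/-- The image of a generator in the Toeplitz Leavitt path algebra. -/
noncomputable def Tgen (x : TG) : ToeplitzL K :=
  RingQuot.mkAlgHom K (TRel K) (FreeAlgebra.ι K x)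

/-- The generators `w, wf*, wf*c*, wf*(c*)², …` of the simple left ideals whose
direct sum is the socle `S = ⟨w⟩`. -/
noncomputable def TsocGen : ℕ → ToeplitzL K
  | 0 => Tgen K TG.w
  | n + 1 => Tgen K TG.w * Tgen K TG.fs * (Tgen K TG.cs) ^ n

/-- The left ideals `Lw` and `L·(wf*(c*)^n)`. -/
noncomputable def TsocComp (n : ℕ) : Submodule (ToeplitzL K) (ToeplitzL K) :=
  Submodule.span (ToeplitzL K) {TsocGen K n}

namespace Tpf

local notation "tv" => Tgen K TG.v
local notation "tw" => Tgen K TG.w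
local notation "tc" => Tgen K TG.c
local notation "tf" => Tgen K TG.f
local notation "tcs" => Tgen K TG.cs
local notation "tfs" => Tgen K TG.fs

lemma rel_eq {a b : FreeAlgebra K TG} (h : TRel K a b) :
    RingQuot.mkAlgHom K (TRel K) a = RingQuot.mkAlgHom K (TRel K) b :=
  RingQuot.mkAlgHom_rel K h

lemma Tvv : tv * tv = tv := by simpa only [Tgen, map_mul] using rel_eq K TRel.vv
lemma Tww : tw * tw = tw := by simpa only [Tgen, map_mul] using rel_eq K TRel.ww
lemma Tvw : tv * tw = 0 := by simpa only [Tgen, map_mul, map_zero] using rel_eq K TRel.vw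
lemma Twv : tw * tv = 0 := by simpa only [Tgen, map_mul, map_zero] using rel_eq K TRel.wv
lemma Tvc : tv * tc = tc := by simpa only [Tgen, map_mul] using rel_eq K TRel.sc
lemma Tcv : tc * tv = tc := by simpa only [Tgen, map_mul] using rel_eq K TRel.rc
lemma Tvf : tv * tf = tf := by simpa only [Tgen, map_mul] using rel_eq K TRel.sf
lemma Tfw : tf * tw = tf := by simpa only [Tgen, map_mul] using rel_eq K TRel.rf
lemma Tvcs : tv * tcs = tcs := by simpa only [Tgen, map_mul] using rel_eq K TRel.rcs
lemma Tcsv : tcs * tv = tcs := by simpa only [Tgen, map_mul] using rel_eq K TRel.scs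
lemma Twfs : tw * tfs = tfs := by simpa only [Tgen, map_mul] using rel_eq K TRel.rfs
lemma Tfsv : tfs * tv = tfs := by simpa only [Tgen, map_mul] using rel_eq K TRel.sfs
lemma Tcsc : tcs * tc = tv := by simpa only [Tgen, map_mul] using rel_eq K TRel.ck1cc
lemma Tfsf : tfs * tf = tw := by simpa only [Tgen, map_mul] using rel_eq K TRel.ck1ff
lemma Tcsf : tcs * tf = 0 := by simpa only [Tgen, map_mul, map_zero] using rel_eq K TRel.ck1cf
lemma Tfsc : tfs * tc = 0 := by simpa only [Tgen, map_mul, map_zero] using rel_eq K TRel.ck1fc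

-- derived vanishing products
lemma Twc : tw * tc = 0 := by rw [← Tvc, ← mul_assoc, Twv, zero_mul]
lemma Tcw : tc * tw = 0 := by rw [← Tcv, mul_assoc, Tvw, mul_zero]
lemma Twf : tw * tf = 0 := by rw [← Tvf, ← mul_assoc, Twv, zero_mul]
lemma Tfv : tf * tv = 0 := by rw [← Tfw, mul_assoc, Twv, mul_zero]
lemma Twcs : tw * tcs = 0 := by rw [← Tvcs, ← mul_assoc, Twv, zero_mul]
lemma Tcsw : tcs * tw = 0 := by rw [← Tcsv, mul_assoc, Tvw, mul_zero]
lemma Tfsw : tfs * tw = 0 := by rw [← Tfsv, mul_assoc, Tvw, mul_zero]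
lemma Tvfs : tv * tfs = 0 := by rw [← Twfs, ← mul_assoc, Tvw, zero_mul]
lemma Tff : tf * tf = 0 := by nth_rw 2 [← Tvf]; rw [← mul_assoc, Tfv, zero_mul]
lemma Tfsfs : tfs * tfs = 0 := by nth_rw 2 [← Twfs]; rw [← mul_assoc, Tfsw, zero_mul]
lemma Tcsfs : tcs * tfs = 0 := by rw [← Twfs, ← mul_assoc, Tcsw, zero_mul]
lemma Tfcs : tf * tcs = 0 := by rw [← Tvcs, ← mul_assoc, Tfv, zero_mul]
lemma Tcc' : tw * tcs = 0 := Twcs K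


/-- `Th 0 = w`, `Th (n+1) = cⁿ f` : the "column" generators. -/
noncomputable def Th : ℕ → ToeplitzL K
  | 0 => Tgen K TG.w
  | n + 1 => (Tgen K TG.c) ^ n * Tgen K TG.f

lemma Th1 : Th K 1 = tf := by simp [Th]

lemma gsucc (n : ℕ) : TsocGen K (n + 2) = TsocGen K (n + 1) * tcs := by
  simp only [TsocGen, pow_succ, mul_assoc]

lemma g1 : TsocGen K 1 = tw * tfs := by simp [TsocGen]

lemma hsucc (n : ℕ) : Th K (n + 2) = tc * Th K (n + 1) := by
  simp only [Th, pow_succ', mul_assoc]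

-- right multiplication table for TsocGen
lemma gv (n : ℕ) : TsocGen K (n + 1) * tv = TsocGen K (n + 1) := by
  cases n with
  | zero => rw [g1, mul_assoc, Tfsv]
  | succ m => rw [gsucc, mul_assoc, Tcsv]

lemma gw (n : ℕ) : TsocGen K (n + 1) * tw = 0 := by
  cases n with
  | zero => rw [g1, mul_assoc, Tfsw, mul_zero]
  | succ m => rw [gsucc, mul_assoc, Tcsw, mul_zero]

lemma gcs (n : ℕ) : TsocGen K (n + 1) * tcs = TsocGen K (n + 2) := (gsucc K n).symm

lemma g0cs : TsocGen K 0 * tcs = 0 := by show tw * tcs = 0; exact Twcs K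

lemma g0fs : TsocGen K 0 * tfs = TsocGen K 1 := by
  show tw * tfs = _; rw [g1]

lemma gfs (n : ℕ) : TsocGen K (n + 1) * tfs = 0 := by
  cases n with
  | zero => rw [g1, mul_assoc, Tfsfs, mul_zero]
  | succ m => rw [gsucc, mul_assoc, Tcsfs, mul_zero]

lemma gc (n : ℕ) : TsocGen K (n + 2) * tc = TsocGen K (n + 1) := by
  rw [gsucc, mul_assoc, Tcsc, gv]

lemma g1c : TsocGen K 1 * tc = 0 := by rw [g1, mul_assoc, Tfsc, mul_zero]

lemma g0c : TsocGen K 0 * tc = 0 := by show tw * tc = 0; exact Twc K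

lemma gf (n : ℕ) : TsocGen K (n + 2) * tf = 0 := by
  rw [gsucc, mul_assoc, Tcsf, mul_zero]

lemma g1f : TsocGen K 1 * tf = TsocGen K 0 := by
  show _ = tw; rw [g1, mul_assoc, Tfsf, Tww]

lemma g0f : TsocGen K 0 * tf = 0 := by show tw * tf = 0; exact Twf K

lemma g0v : TsocGen K 0 * tv = 0 := by show tw * tv = 0; exact Twv K

lemma g0w : TsocGen K 0 * tw = TsocGen K 0 := by show tw * tw = tw; exact Tww K

lemma wg (n : ℕ) : tw * TsocGen K n = TsocGen K n := by
  cases n with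
  | zero => exact Tww K
  | succ m =>
    show tw * (tw * tfs * tcs ^ m) = tw * tfs * tcs ^ m
    rw [← mul_assoc, ← mul_assoc, Tww]

-- left multiplication table for Th
lemma vh (n : ℕ) : tv * Th K (n + 1) = Th K (n + 1) := by
  cases n with
  | zero => rw [Th1, Tvf]
  | succ m => rw [hsucc, ← mul_assoc, Tvc]

lemma vh0 : tv * Th K 0 = 0 := Tvw K

lemma wh (n : ℕ) : tw * Th K (n + 1) = 0 := by
  rw [← vh, ← mul_assoc, Twv, zero_mul]

lemma ch (n : ℕ) : tc * Th K (n + 1) = Th K (n + 2) := (hsucc K n).symm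

lemma ch0 : tc * Th K 0 = 0 := Tcw K

lemma fh (n : ℕ) : tf * Th K (n + 1) = 0 := by
  rw [← vh, ← mul_assoc, Tfv, zero_mul]

lemma fh0 : tf * Th K 0 = Th K 1 := by rw [Th1]; exact Tfw K

lemma csh (n : ℕ) : tcs * Th K (n + 2) = Th K (n + 1) := by
  rw [hsucc, ← mul_assoc, Tcsc, vh]

lemma csh1 : tcs * Th K 1 = 0 := by rw [Th1]; exact Tcsf K

lemma csh0 : tcs * Th K 0 = 0 := Tcsw K

lemma fsh1 : tfs * Th K 1 = Th K 0 := by rw [Th1]; exact Tfsf K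

lemma fsh (n : ℕ) : tfs * Th K (n + 2) = 0 := by
  rw [hsucc, ← mul_assoc, Tfsc, zero_mul]

lemma fsh0 : tfs * Th K 0 = 0 := Tfsw K

-- products TsocGen * Th
lemma gh_eq : ∀ n, TsocGen K n * Th K n = tw
  | 0 => Tww K
  | 1 => by rw [g1, Th1, mul_assoc, Tfsf, Tww]
  | (n + 2) => by rw [gsucc, hsucc, mul_assoc, ← mul_assoc tcs, Tcsc, vh, gh_eq (n + 1)]

lemma gh_ne : ∀ m n, m ≠ n → TsocGen K m * Th K n = 0
  | 0, 0, h => absurd rfl h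
  | 0, (n + 1), _ => wh K n
  | (m + 1), 0, _ => gw K m
  | 1, (n + 1), h => by
    cases n with
    | zero => exact absurd rfl h
    | succ p => rw [g1, mul_assoc, fsh, mul_zero]
  | (m + 2), (n + 1), h => by
    cases n with
    | zero => rw [gsucc, mul_assoc, csh1, mul_zero]
    | succ p =>
      rw [gsucc, hsucc, mul_assoc, ← mul_assoc tcs, Tcsc, vh]
      exact gh_ne (m + 1) (p + 1) (by omega)

lemma gh (k i : ℕ) : TsocGen K k * Th K i = if i = k then tw else 0 := by
  rcases eq_or_ne i k with rfl | h
  · rw [if_pos rfl, gh_eq]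
  · rw [if_neg h, gh_ne _ _ _ (Ne.symm h)]


/-! ### The representation on `ℕ →₀ K` -/

/-- Images of basis vectors under the generators. -/
noncomputable def tvec : TG → ℕ → (ℕ →₀ K)
  | TG.v => fun n => if n = 0 then 0 else Finsupp.single n 1
  | TG.w => fun n => if n = 0 then Finsupp.single 0 1 else 0
  | TG.c => fun n => if n = 0 then 0 else Finsupp.single (n + 1) 1
  | TG.f => fun n => if n = 0 then Finsupp.single 1 1 else 0
  | TG.cs => fun n => match n with
      | 0 => 0 | 1 => 0 | (m + 2) => Finsupp.single (m + 1) 1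
  | TG.fs => fun n => if n = 1 then Finsupp.single 0 1 else 0

noncomputable def Egen (x : TG) : Module.End K (ℕ →₀ K) :=
  Finsupp.lsum K fun n => LinearMap.toSpanSingleton K (ℕ →₀ K) (tvec K x n)

lemma Egen_single (x : TG) (n : ℕ) (a : K) :
    Egen K x (Finsupp.single n a) = a • tvec K x n := by
  simp [Egen, Finsupp.lsum_single, LinearMap.toSpanSingleton_apply]

lemma Trel_holds : ∀ ⦃a b : FreeAlgebra K TG⦄, TRel K a b →
    FreeAlgebra.lift K (Egen K) a = FreeAlgebra.lift K (Egen K) b := by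
  intro a b h
  cases h <;>
  · simp only [map_mul, map_add, map_zero, FreeAlgebra.lift_ι_apply]
    apply Finsupp.lhom_ext
    intro n a
    rcases n with _ | _ | n <;>
      simp [Module.End.mul_apply, Egen_single, tvec, map_smul, Finsupp.single_eq_zero]

/-- The representation of the Toeplitz Leavitt path algebra on `ℕ →₀ K`. -/
noncomputable def Phi : ToeplitzL K →ₐ[K] Module.End K (ℕ →₀ K) :=
  RingQuot.liftAlgHom K ⟨FreeAlgebra.lift K (Egen K), Trel_holds K⟩

lemma Phi_Tgen (x : TG) : Phi K (Tgen K x) = Egen K x := by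
  rw [Tgen, Phi, RingQuot.liftAlgHom_mkAlgHom_apply, FreeAlgebra.lift_ι_apply]


lemma gApply : ∀ k j, Phi K (TsocGen K k) (Finsupp.single j (1 : K)) =
    if j = k then Finsupp.single 0 1 else 0
  | 0, j => by
    show Phi K (Tgen K TG.w) _ = _
    rw [Phi_Tgen, Egen_single, one_smul]
    rcases j with _ | j <;> simp [tvec]
  | 1, j => by
    rw [g1, map_mul, Module.End.mul_apply, Phi_Tgen K TG.fs, Egen_single, one_smul]
    rcases j with _ | _ | j <;>
      simp [tvec, Phi_Tgen, Egen_single, map_smul, Finsupp.single_eq_zero]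
  | (n + 2), j => by
    rw [gsucc, map_mul, Module.End.mul_apply, Phi_Tgen K TG.cs, Egen_single, one_smul]
    rcases j with _ | _ | j
    · simp [tvec]
    · simp [tvec]
    · have := gApply (n + 1) (j + 1)
      simp only [tvec, one_smul, this]
      by_cases h : j = n
      · subst h; simp
      · rw [if_neg (by omega), if_neg (by omega)]

lemma gsmul (k : ℕ) (u : ℕ →₀ K) :
    Phi K (TsocGen K k) u = u k • Finsupp.single 0 1 := by
  induction u using Finsupp.induction_linear with
  | zero => simp
  | add x y hx hy => rw [map_add, hx, hy, Finsupp.add_apply, add_smul]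
  | single n b =>
    have : Finsupp.single n b = b • Finsupp.single n (1 : K) := by
      rw [Finsupp.smul_single, smul_eq_mul, mul_one]
    rw [this, map_smul, gApply, Finsupp.smul_apply, Finsupp.single_apply]
    by_cases h : n = k
    · subst h; simp [smul_smul]
    · rw [if_neg h, if_neg h, smul_zero, smul_zero, zero_smul]

lemma g_ne_zero (k : ℕ) : TsocGen K k ≠ 0 := by
  intro h
  have h2 := gApply K k k
  rw [h, map_zero, if_pos rfl] at h2
  simp only [LinearMap.zero_apply] at h2
  exact one_ne_zero (Finsupp.single_eq_zero.mp h2.symm)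


/-! ### Closure lemmas -/

lemma g_mem_M (n : ℕ) : TsocGen K n ∈ ⨆ m, TsocComp K m :=
  Submodule.mem_iSup_of_mem n (Submodule.mem_span_singleton_self _)

lemma M_mul_gen (n : ℕ) (x : TG) : TsocGen K n * Tgen K x ∈ ⨆ m, TsocComp K m := by
  cases x <;> rcases n with _ | _ | n
  · rw [g0v]; exact Submodule.zero_mem _
  · rw [gv]; exact g_mem_M K _
  · rw [gv]; exact g_mem_M K _
  · rw [g0w]; exact g_mem_M K _
  · rw [gw]; exact Submodule.zero_mem _
  · rw [gw]; exact Submodule.zero_mem _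
  · rw [g0c]; exact Submodule.zero_mem _
  · rw [g1c]; exact Submodule.zero_mem _
  · rw [gc]; exact g_mem_M K _
  · rw [g0f]; exact Submodule.zero_mem _
  · rw [g1f]; exact g_mem_M K _
  · rw [gf]; exact Submodule.zero_mem _
  · rw [g0cs]; exact Submodule.zero_mem _
  · rw [gcs]; exact g_mem_M K _
  · rw [gcs]; exact g_mem_M K _
  · rw [g0fs]; exact g_mem_M K _
  · rw [gfs]; exact Submodule.zero_mem _
  · rw [gfs]; exact Submodule.zero_mem _

lemma M_mul_closed (b x : ToeplitzL K) (hx : x ∈ ⨆ m, TsocComp K m) :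
    x * b ∈ ⨆ m, TsocComp K m := by
  obtain ⟨p, rfl⟩ := RingQuot.mkAlgHom_surjective K (TRel K) b
  induction p using FreeAlgebra.induction generalizing x with
  | grade0 r =>
    rw [AlgHom.commutes, ← Algebra.commutes r x, ← smul_eq_mul]
    exact Submodule.smul_mem _ _ hx
  | grade1 g =>
    have hle : (⨆ m, TsocComp K m) ≤
        (⨆ m, TsocComp K m).comap
          (LinearMap.toSpanSingleton (ToeplitzL K) (ToeplitzL K) (Tgen K g)) := by
      refine iSup_le fun n => Submodule.span_le.mpr ?_
      rw [Set.singleton_subset_iff, SetLike.mem_coe, Submodule.mem_comap,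
        LinearMap.toSpanSingleton_apply, smul_eq_mul]
      exact M_mul_gen K n g
    have := hle hx
    rw [Submodule.mem_comap, LinearMap.toSpanSingleton_apply, smul_eq_mul] at this
    exact this
  | mul a b iha ihb =>
    rw [map_mul, ← mul_assoc]
    exact ihb _ (iha _ hx)
  | add a b iha ihb =>
    rw [map_add, mul_add]
    exact add_mem (iha _ hx) (ihb _ hx)

/-- The span of the `Th n` over `K`. -/
noncomputable def Hspan : Submodule K (ToeplitzL K) :=
  Submodule.span K (Set.range (Th K))

lemma h_mem_H (n : ℕ) : Th K n ∈ Hspan K :=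
  Submodule.subset_span (Set.mem_range_self n)

lemma gen_mul_h (x : TG) (n : ℕ) : Tgen K x * Th K n ∈ Hspan K := by
  cases x <;> rcases n with _ | _ | n
  · rw [vh0]; exact Submodule.zero_mem _
  · rw [vh]; exact h_mem_H K _
  · rw [vh]; exact h_mem_H K _
  · rw [show tw * Th K 0 = Th K 0 from Tww K]; exact h_mem_H K _
  · rw [wh]; exact Submodule.zero_mem _
  · rw [wh]; exact Submodule.zero_mem _
  · rw [ch0]; exact Submodule.zero_mem _
  · rw [ch]; exact h_mem_H K _
  · rw [ch]; exact h_mem_H K _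
  · rw [fh0]; exact h_mem_H K _
  · rw [fh]; exact Submodule.zero_mem _
  · rw [fh]; exact Submodule.zero_mem _
  · rw [csh0]; exact Submodule.zero_mem _
  · rw [csh1]; exact Submodule.zero_mem _
  · rw [csh]; exact h_mem_H K _
  · rw [fsh0]; exact Submodule.zero_mem _
  · rw [fsh1]; exact h_mem_H K _
  · rw [fsh]; exact Submodule.zero_mem _

lemma mul_w_mem_H (a : ToeplitzL K) : a * Tgen K TG.w ∈ Hspan K := by
  have key : ∀ q ∈ Hspan K, a * q ∈ Hspan K := by
    obtain ⟨p, rfl⟩ := RingQuot.mkAlgHom_surjective K (TRel K) a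
    induction p using FreeAlgebra.induction with
    | grade0 r =>
      intro q hq
      rw [AlgHom.commutes, ← Algebra.smul_def]
      exact Submodule.smul_mem _ _ hq
    | grade1 g =>
      intro q hq
      have hle : Hspan K ≤ (Hspan K).comap (LinearMap.mulLeft K (Tgen K g)) := by
        refine Submodule.span_le.mpr ?_
        rintro - ⟨n, rfl⟩
        exact gen_mul_h K g n
      exact hle hq
    | mul a b iha ihb =>
      intro q hq
      rw [map_mul, mul_assoc]
      exact iha _ (ihb _ hq)
    | add a b iha ihb =>
      intro q hq
      rw [map_add, add_mul]
      exact add_mem (iha _ hq) (ihb _ hq)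
  exact key _ (h_mem_H K 0)


/-! ### The "bounded image support" two-sided ideal -/

/-- Elements whose image under `Phi` has image supported in `[0, N)` for some `N`. -/
def FRset : Set (ToeplitzL K) :=
  {s | ∃ N : ℕ, ∀ (u : ℕ →₀ K) (m : ℕ), N ≤ m → Phi K s u m = 0}

lemma FR_expand (x : ToeplitzL K) (z : ℕ →₀ K) :
    Phi K x z = z.sum fun i c => c • Phi K x (Finsupp.single i 1) := by
  conv_lhs => rw [← Finsupp.sum_single z]
  rw [map_finsuppSum]
  refine Finsupp.sum_congr fun i hi => ?_
  rw [← map_smul]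
  congr 1
  rw [Finsupp.smul_single, smul_eq_mul, mul_one]

noncomputable def FRideal : TwoSidedIdeal (ToeplitzL K) := by
  refine TwoSidedIdeal.mk' (FRset K) ⟨0, by simp⟩ ?_ ?_ ?_ ?_
  · rintro x y ⟨N₁, h₁⟩ ⟨N₂, h₂⟩
    refine ⟨max N₁ N₂, fun u m hm => ?_⟩
    rw [map_add, LinearMap.add_apply, Finsupp.add_apply,
      h₁ u m (le_trans (le_max_left _ _) hm), h₂ u m (le_trans (le_max_right _ _) hm), add_zero]
  · rintro x ⟨N, h⟩
    exact ⟨N, fun u m hm => by rw [map_neg, LinearMap.neg_apply, Finsupp.neg_apply, h u m hm,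
      neg_zero]⟩
  · rintro x y ⟨N, h⟩
    refine ⟨(Finset.range N).sup (fun j => (Phi K x (Finsupp.single j 1)).support.sup id) + 1,
      fun u m hm => ?_⟩
    rw [map_mul, Module.End.mul_apply]
    set z := Phi K y u with hz
    have hzs : ∀ i ∈ z.support, i < N := by
      intro i hi
      by_contra h'
      exact (Finsupp.mem_support_iff.mp hi) (h u i (le_of_not_gt h'))
    rw [FR_expand, Finsupp.sum_apply, Finsupp.sum]
    refine Finset.sum_eq_zero fun i hi => ?_
    rw [Finsupp.smul_apply]
    have hzero : (Phi K x (Finsupp.single i 1)) m = 0 := by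
      by_contra hne
      have hmem : m ∈ (Phi K x (Finsupp.single i 1)).support := Finsupp.mem_support_iff.mpr hne
      have h1 : m ≤ (Phi K x (Finsupp.single i 1)).support.sup id := Finset.le_sup (f := id) hmem
      have h2 : (Phi K x (Finsupp.single i 1)).support.sup id ≤
          (Finset.range N).sup (fun j => (Phi K x (Finsupp.single j 1)).support.sup id) :=
        Finset.le_sup (f := fun j => (Phi K x (Finsupp.single j 1)).support.sup id)
          (Finset.mem_range.mpr (hzs i hi))
      omega
    rw [hzero, smul_zero]
  · rintro x y ⟨N, h⟩
    exact ⟨N, fun u m hm => by rw [map_mul, Module.End.mul_apply]; exact h _ m hm⟩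

lemma FR_w : Tgen K TG.w ∈ FRset K := by
  refine ⟨1, fun u m hm => ?_⟩
  have : Tgen K TG.w = TsocGen K 0 := rfl
  rw [this, gsmul, Finsupp.smul_apply, Finsupp.single_apply, if_neg (by omega), smul_zero]

lemma g_mem_span (k : ℕ) : TsocGen K k ∈ TwoSidedIdeal.span {Tgen K TG.w} := by
  have hw : Tgen K TG.w ∈ TwoSidedIdeal.span {Tgen K TG.w} :=
    TwoSidedIdeal.mem_span_iff.mpr fun I hI => hI rfl
  cases k with
  | zero => exact hw
  | succ n =>
    show tw * tfs * tcs ^ n ∈ _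
    exact TwoSidedIdeal.mul_mem_right _ _ _ (TwoSidedIdeal.mul_mem_right _ _ _ hw)


/-! ### The four conjuncts -/

lemma part1 : TwoSidedIdeal.asIdeal (TwoSidedIdeal.span {Tgen K TG.w}) = ⨆ n, TsocComp K n := by
  apply le_antisymm
  · intro x hx
    rw [TwoSidedIdeal.mem_asIdeal] at hx
    have hM := TwoSidedIdeal.mem_span_iff.mp hx
      (TwoSidedIdeal.mk' {x : ToeplitzL K | x ∈ ⨆ n, TsocComp K n}
        (show (0 : ToeplitzL K) ∈ ⨆ n, TsocComp K n from Submodule.zero_mem _)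
        (fun {a b} ha hb => show a + b ∈ ⨆ n, TsocComp K n from
          Submodule.add_mem _ ha hb)
        (fun {a} ha => show -a ∈ ⨆ n, TsocComp K n from Submodule.neg_mem _ ha)
        (fun {a y} hy => show a * y ∈ ⨆ n, TsocComp K n by
          rw [← smul_eq_mul]; exact Submodule.smul_mem _ a hy)
        (fun {a y} ha => show a * y ∈ ⨆ n, TsocComp K n from M_mul_closed K y a ha))
      (by
        rw [Set.singleton_subset_iff, SetLike.mem_coe, TwoSidedIdeal.mem_mk']
        exact g_mem_M K 0)
    rwa [TwoSidedIdeal.mem_mk'] at hM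
  · refine iSup_le fun n => Submodule.span_le.mpr ?_
    rw [Set.singleton_subset_iff, SetLike.mem_coe, TwoSidedIdeal.mem_asIdeal]
    exact g_mem_span K n

lemma part2 : iSupIndep (TsocComp K) := by
  intro n
  rw [Submodule.disjoint_def]
  intro x hx hx'
  obtain ⟨a, rfl⟩ := Submodule.mem_span_singleton.mp hx
  have hker : (⨆ (j) (_ : j ≠ n), TsocComp K j) ≤
      LinearMap.ker (LinearMap.toSpanSingleton (ToeplitzL K) (ToeplitzL K) (Th K n)) := by
    refine iSup_le fun m => iSup_le fun hm => Submodule.span_le.mpr ?_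
    rw [Set.singleton_subset_iff, SetLike.mem_coe, LinearMap.mem_ker,
      LinearMap.toSpanSingleton_apply, smul_eq_mul]
    exact gh_ne K m n hm
  have h0 : (a • TsocGen K n) * Th K n = 0 := by
    have := hker hx'
    rwa [LinearMap.mem_ker, LinearMap.toSpanSingleton_apply, smul_eq_mul] at this
  calc a • TsocGen K n = ((a • TsocGen K n) * Th K n) * TsocGen K n := by
        rw [smul_eq_mul, mul_assoc a (TsocGen K n) (Th K n), gh_eq,
          mul_assoc a tw (TsocGen K n), wg]
    _ = 0 := by rw [h0, zero_mul]

lemma part3_ne (n : ℕ) : TsocComp K n ≠ ⊥ := by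
  simp only [TsocComp, ne_eq, Submodule.span_singleton_eq_bot]
  exact g_ne_zero K n

lemma part3_simple (n : ℕ) (J : Submodule (ToeplitzL K) (ToeplitzL K))
    (hJ : J ≤ TsocComp K n) : J = ⊥ ∨ J = TsocComp K n := by
  by_cases hbot : J = ⊥
  · exact Or.inl hbot
  right
  obtain ⟨x, hxJ, hx0⟩ := Submodule.exists_mem_ne_zero_of_ne_bot hbot
  obtain ⟨a, rfl⟩ := Submodule.mem_span_singleton.mp (hJ hxJ)
  rw [smul_eq_mul] at hxJ hx0
  have hback : (a * Tgen K TG.w) * TsocGen K n = a * TsocGen K n := by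
    rw [mul_assoc, wg]
  have hzH : a * Tgen K TG.w ∈ Hspan K := mul_w_mem_H K a
  have hz0 : a * Tgen K TG.w ≠ 0 := by
    intro h
    exact hx0 (by rw [← hback, h, zero_mul])
  obtain ⟨c, hc⟩ := Finsupp.mem_span_range_iff_exists_finsupp.mp hzH
  have hkex : ∃ k, c k ≠ 0 := by
    by_contra h
    push_neg at h
    apply hz0
    rw [← hc]
    have : c = 0 := Finsupp.ext fun k => h k
    rw [this, Finsupp.sum_zero_index]
  obtain ⟨k, hk⟩ := hkex
  have hmul : TsocGen K k * (a * Tgen K TG.w) = c k • Tgen K TG.w := by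
    rw [← hc]
    calc TsocGen K k * (c.sum fun i r => r • Th K i)
        = c.sum fun i r => TsocGen K k * (r • Th K i) :=
          map_finsuppSum (LinearMap.mulLeft K (TsocGen K k)) c _
      _ = c.sum fun i r => if i = k then r • Tgen K TG.w else 0 := by
          refine Finsupp.sum_congr fun i _ => ?_
          rw [mul_smul_comm, gh]
          split <;> simp
      _ = c k • Tgen K TG.w := by
          rw [Finsupp.sum, Finset.sum_ite_eq' c.support k (fun i => c i • Tgen K TG.w),
            if_pos (Finsupp.mem_support_iff.mpr hk)]
  have hw_in : Tgen K TG.w = ((c k)⁻¹ • TsocGen K k) * (a * Tgen K TG.w) := by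
    rw [smul_mul_assoc, hmul, smul_smul, inv_mul_cancel₀ hk, one_smul]
  have hgn : TsocGen K n = ((c k)⁻¹ • TsocGen K k) • (a * TsocGen K n) := by
    calc TsocGen K n = tw * TsocGen K n := (wg K n).symm
      _ = (((c k)⁻¹ • TsocGen K k) * (a * Tgen K TG.w)) * TsocGen K n := by rw [← hw_in]
      _ = ((c k)⁻¹ • TsocGen K k) * ((a * Tgen K TG.w) * TsocGen K n) := mul_assoc _ _ _
      _ = ((c k)⁻¹ • TsocGen K k) * (a * TsocGen K n) := by rw [hback]
      _ = _ := by rw [smul_eq_mul]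
  have hgen : TsocGen K n ∈ J := by
    rw [hgn]
    exact Submodule.smul_mem J _ hxJ
  exact le_antisymm hJ (Submodule.span_le.mpr (Set.singleton_subset_iff.mpr hgen))

lemma part4 : ¬ ∃ T : Submodule (ToeplitzL K) (ToeplitzL K),
    IsCompl (TwoSidedIdeal.asIdeal (TwoSidedIdeal.span {Tgen K TG.w})) T := by
  rintro ⟨T, hT⟩
  set S' := TwoSidedIdeal.asIdeal (TwoSidedIdeal.span {Tgen K TG.w}) with hS'
  let π := Submodule.linearProjOfIsCompl S' T hT
  set s : ToeplitzL K := (π 1 : ToeplitzL K) with hsdef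
  have hs : s ∈ TwoSidedIdeal.span {Tgen K TG.w} := TwoSidedIdeal.mem_asIdeal.mp (π 1).2
  have hgs : ∀ k, TsocGen K k * s = TsocGen K k := by
    intro k
    have hgk : TsocGen K k ∈ S' := TwoSidedIdeal.mem_asIdeal.mpr (g_mem_span K k)
    have h1 : π (TsocGen K k) = ⟨TsocGen K k, hgk⟩ :=
      Submodule.linearProjOfIsCompl_apply_left hT ⟨_, hgk⟩
    have h2 : π (TsocGen K k) = TsocGen K k • π 1 := by
      rw [← map_smul]
      congr 1
      rw [smul_eq_mul, mul_one]
    have h3 := congrArg Subtype.val (h1.symm.trans h2)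
    simp only [SetLike.val_smul, smul_eq_mul] at h3
    exact h3.symm
  have hFR : s ∈ FRset K := by
    have := TwoSidedIdeal.mem_span_iff.mp hs (FRideal K)
      (by rw [Set.singleton_subset_iff, SetLike.mem_coe]
          exact (TwoSidedIdeal.mem_mk' _ _ _ _ _ _ _).mpr (FR_w K))
    exact (TwoSidedIdeal.mem_mk' _ _ _ _ _ _ _).mp this
  obtain ⟨N, hN⟩ := hFR
  have h1 : Phi K (TsocGen K N * s) (Finsupp.single N 1) = 0 := by
    rw [map_mul, Module.End.mul_apply, gsmul, hN (Finsupp.single N 1) N le_rfl, zero_smul]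
  rw [hgs, gApply, if_pos rfl] at h1
  exact one_ne_zero (Finsupp.single_eq_zero.mp h1)

end Tpf

/-- In the Leavitt path algebra `L` of the Toeplitz graph, the two-sided ideal
`S = ⟨w⟩` is the internal direct sum `Lw ⊕ ⊕_{n=0}^∞ L·(wf*(c*)^n)` of infinitely
many simple left ideals, and `S` is not a direct summand of `L` as a left
`L`-module. -/
theorem toeplitz_socle_not_direct_summand :
    (TwoSidedIdeal.asIdeal (TwoSidedIdeal.span {Tgen K TG.w}) = ⨆ n, TsocComp K n) ∧
    iSupIndep (TsocComp K) ∧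
    (∀ n : ℕ, TsocComp K n ≠ ⊥ ∧
      ∀ J : Submodule (ToeplitzL K) (ToeplitzL K),
        J ≤ TsocComp K n → J = ⊥ ∨ J = TsocComp K n) ∧
    ¬ ∃ T : Submodule (ToeplitzL K) (ToeplitzL K),
        IsCompl (TwoSidedIdeal.asIdeal (TwoSidedIdeal.span {Tgen K TG.w})) T :=
  ⟨Tpf.part1 K, Tpf.part2 K, fun n => ⟨Tpf.part3_ne K n, Tpf.part3_simple K n⟩, Tpf.part4 K⟩
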